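/- For partitions λ, μ ⊆ l×k, the maximal power d_max of q appearing in the quantum product σ_λ * σ_μ in QH*(Gr(l,l+k)) satisfies d_max ≤ min(diag(λ), diag(μ)), where diag(ν) is the side length of the largest square contained in ν. -/

import Mathlib

open YoungDiagram

namespace QCGrass

/-- The rectangular Young diagram with `m` rows of length `M`. -/
def rect (m M : ℕ) : YoungDiagram :=
  ⟨Finset.range m ×ˢ Finset.range M, by
    intro a b hba ha
    simp only [Finset.coe_product, Set.mem_prod, Finset.mem_coe, Finset.mem_range] at *
    exact ⟨lt_of_le_of_lt hba.1 ha.1, lt_of_le_of_lt hba.2 ha.2⟩⟩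

/-- The cells of the skew shape `nu / lam`. -/
def skewCells (lam nu : YoungDiagram) : Finset (ℕ × ℕ) := nu.cells \ lam.cells

/-- `T` is a Littlewood–Richardson skew tableau of shape `nu / lam` and content `mu`:
entries (valued in `{1, 2, …}`, with `0` meaning "no entry") are supported exactly on the
skew shape `nu / lam`, weakly increase along rows, strictly increase down columns, the number
of entries equal to `r + 1` is the `r`-th row length of `mu`, and the reverse reading word
(rows read right to left, top to bottom) is a lattice word. -/
def IsLRTableau (lam mu nu : YoungDiagram) (T : ℕ × ℕ → ℕ) : Prop :=
  lam ≤ nu ∧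
  (∀ p : ℕ × ℕ, 1 ≤ T p ↔ p ∈ skewCells lam nu) ∧
  (∀ i j j' : ℕ, j ≤ j' → (i, j) ∈ skewCells lam nu → (i, j') ∈ skewCells lam nu →
      T (i, j) ≤ T (i, j')) ∧
  (∀ i i' j : ℕ, i < i' → (i, j) ∈ skewCells lam nu → (i', j) ∈ skewCells lam nu →
      T (i, j) < T (i', j)) ∧
  (∀ r : ℕ, ((skewCells lam nu).filter (fun p => T p = r + 1)).card = mu.rowLen r) ∧
  (∀ i j r : ℕ,
      ((skewCells lam nu).filter
        (fun p => T p = r + 2 ∧ (p.1 < i ∨ (p.1 = i ∧ j ≤ p.2)))).card ≤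
      ((skewCells lam nu).filter
        (fun p => T p = r + 1 ∧ (p.1 < i ∨ (p.1 = i ∧ j ≤ p.2)))).card)

/-- The Littlewood–Richardson coefficient `c^nu_{lam, mu}`, defined as the number of
Littlewood–Richardson skew tableaux of shape `nu / lam` and content `mu`. -/
noncomputable def lrCoeff (lam mu nu : YoungDiagram) : ℕ :=
  Nat.card {T : ℕ × ℕ → ℕ // IsLRTableau lam mu nu T}

/-- The set of boxes (in `0`-indexed matrix coordinates) of `mu` rotated 180 degrees and
placed in the lower-right corner of the `l × k` rectangle. -/
def rotSet (l k : ℕ) (mu : YoungDiagram) : Set (ℕ × ℕ) :=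
  {p | p.1 < l ∧ p.2 < k ∧ k - mu.rowLen (l - 1 - p.1) ≤ p.2}

/-- Two boxes are adjacent when they share an edge. -/
def Adjacent (p q : ℕ × ℕ) : Prop :=
  (p.1 = q.1 ∧ (p.2 = q.2 + 1 ∨ q.2 = p.2 + 1)) ∨
  (p.2 = q.2 ∧ (p.1 = q.1 + 1 ∨ q.1 = p.1 + 1))

/-- `mu` is obtained from `lam` by removing a legal `n`-rim hook: `mu ⊆ lam` (so the removal
leaves a Young diagram), the removed set has `n` boxes, is edge-connected, and contains
no `2 × 2` square. -/
def IsRimHookRemoval (n : ℕ) (lam mu : YoungDiagram) : Prop :=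
  mu ≤ lam ∧ (skewCells mu lam).card = n ∧
  (∀ p ∈ skewCells mu lam, ∀ q ∈ skewCells mu lam,
    Relation.ReflTransGen
      (fun a b => a ∈ skewCells mu lam ∧ b ∈ skewCells mu lam ∧ Adjacent a b) p q) ∧
  ¬ ∃ i j : ℕ, (i, j) ∈ skewCells mu lam ∧ (i + 1, j) ∈ skewCells mu lam ∧
      (i, j + 1) ∈ skewCells mu lam ∧ (i + 1, j + 1) ∈ skewCells mu lam

/-- One legal `n`-rim hook removal step. -/
def RimStep (n : ℕ) (lam mu : YoungDiagram) : Prop := IsRimHookRemoval n lam mu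

/-- A diagram is an `n`-core when no legal `n`-rim hook can be removed from it. -/
def IsCore (n : ℕ) (t : YoungDiagram) : Prop := ¬ ∃ s, RimStep n t s

/-- `ReachesIn n m a b` : `b` is obtained from `a` by `m` successive legal `n`-rim hook
removals. -/
def ReachesIn (n : ℕ) : ℕ → YoungDiagram → YoungDiagram → Prop
  | 0 => fun a b => a = b
  | m + 1 => fun a b => ∃ c, RimStep n a c ∧ ReachesIn n m c b

/-- The width (number of occupied columns) of the strip removed in passing
from `lam` to `mu`. -/
def hookWidth (lam mu : YoungDiagram) : ℕ := ((skewCells mu lam).image Prod.snd).card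

/-- The height (number of occupied rows) of the strip removed in passing
from `lam` to `mu`. -/
def hookHeight (lam mu : YoungDiagram) : ℕ := ((skewCells mu lam).image Prod.fst).card

/-- `ReachesInSign n k m s a b` : `b` is obtained from `a` by `m` successive legal `n`-rim
hook removals, and `s = ∏ (-1)^(k - width(R_i))` over the removed hooks `R_i`. -/
def ReachesInSign (n k : ℕ) : ℕ → ℤ → YoungDiagram → YoungDiagram → Prop
  | 0 => fun s a b => a = b ∧ s = 1
  | m + 1 => fun s a b => ∃ c s', RimStep n a c ∧ ReachesInSign n k m s' c b ∧
      s = (-1) ^ (k - hookWidth a c) * s'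

/-- `diagLen lam` is the number of diagonal boxes of `lam`, i.e. the side length of the
largest square contained in `lam`. -/
def diagLen (lam : YoungDiagram) : ℕ := (lam.cells.filter fun p => p.1 = p.2).card

/-- A `d × d` square of boxes fits inside `lam ∩ rotate(mu)` within the `l × k` rectangle. -/
def SquareFits (l k : ℕ) (lam mu : YoungDiagram) (d : ℕ) : Prop :=
  ∃ i j : ℕ, ∀ i' j' : ℕ, i ≤ i' → i' < i + d → j ≤ j' → j' < j + d →
    (i', j') ∈ lam.cells ∧ (i', j') ∈ rotSet l k mu

/-- The triple product `σ_lam · σ_mu · σ_nu` is nonzero in `H^*(Gr(l, l+k))`: some `rho ⊆ l × k`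
has `c^rho_{lam,mu} ≠ 0` and `rho` is disjoint from `rotate(nu)`. -/
def TripleNonzero (l k : ℕ) (lam mu nu : YoungDiagram) : Prop :=
  ∃ rho, rho ≤ rect l k ∧ lrCoeff lam mu rho ≠ 0 ∧
    ∀ i, i < l → rho.rowLen i + nu.rowLen (l - 1 - i) ≤ k


/-- The pairs `(rho, T)` where `T` is an LR tableau witnessing `c^rho_{lam,mu}`, `rho` has
first part at most `k`, and the reduction of `rho` to its `(l+k)`-core `nu` uses `e` rim hook
removals with total sign `s`. -/
def QSet (l k : ℕ) (lam mu nu : YoungDiagram) (e : ℕ) (s : ℤ) : Type :=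
  {p : YoungDiagram × (ℕ × ℕ → ℕ) //
    IsLRTableau lam mu p.1 p.2 ∧ p.1.rowLen 0 ≤ k ∧
    ReachesInSign (l + k) k e s p.1 nu ∧ IsCore (l + k) nu}

/-- The coefficient of `q^e σ_nu` in the quantum product `σ_lam * σ_mu` in
`QH^*(Gr(l, l+k))`, as given by the rim hook rule of Bertram–Ciocan-Fontanine–Fulton:
`Σ_{rho} (-1)^{Σ (k - width(R_i))} c^rho_{lam,mu}` over `rho` with first part at most `k`
whose `(l+k)`-core is `nu` with `e` rim hooks removed. -/
noncomputable def qCoeff (l k : ℕ) (lam mu nu : YoungDiagram) (e : ℕ) : ℤ :=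
  (Nat.card (QSet l k lam mu nu e 1) : ℤ) - (Nat.card (QSet l k lam mu nu e (-1)) : ℤ)


section Auxiliary

lemma rowLen_mono {a b : YoungDiagram} (h : a ≤ b) (i : ℕ) : a.rowLen i ≤ b.rowLen i := by
  by_contra hc
  push_neg at hc
  have hm : (i, a.rowLen i - 1) ∈ a := by
    rw [mem_iff_lt_rowLen]; omega
  have := cells_subset_iff.mpr h (mem_cells _ |>.mpr hm)
  rw [mem_cells, mem_iff_lt_rowLen] at this
  omega

lemma colLen_mono {a b : YoungDiagram} (h : a ≤ b) (j : ℕ) : a.colLen j ≤ b.colLen j := by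
  by_contra hc
  push_neg at hc
  have hm : (a.colLen j - 1, j) ∈ a := by
    rw [mem_iff_lt_colLen]; omega
  have := cells_subset_iff.mpr h (mem_cells _ |>.mpr hm)
  rw [mem_cells, mem_iff_lt_colLen] at this
  omega

lemma mem_rect_iff {l k i j : ℕ} : (i, j) ∈ rect l k ↔ i < l ∧ j < k := by
  show (i, j) ∈ (rect l k).cells ↔ _
  simp [rect, Finset.mem_product]

lemma colLen_rect_le {l k : ℕ} {xi : YoungDiagram} (h : xi ≤ rect l k) (c : ℕ) :
    xi.colLen c ≤ l := by
  by_contra hc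
  push_neg at hc
  have hm : (l, c) ∈ xi := by rw [mem_iff_lt_colLen]; omega
  have := cells_subset_iff.mpr h (mem_cells _ |>.mpr hm)
  rw [mem_cells, mem_rect_iff] at this
  omega

lemma mem_skewCells {lam nu : YoungDiagram} {p : ℕ × ℕ} :
    p ∈ skewCells lam nu ↔ p ∈ nu ∧ p ∉ lam := by
  simp [skewCells, Finset.mem_sdiff, mem_cells]

/-- entries are at most the number of rows of `mu` -/
lemma entry_le {lam mu nu : YoungDiagram} {T : ℕ × ℕ → ℕ} (hT : IsLRTableau lam mu nu T)
    {p : ℕ × ℕ} (hp : p ∈ skewCells lam nu) : T p ≤ mu.colLen 0 := by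
  obtain ⟨-, h1, -, -, h5, -⟩ := hT
  have hv : 1 ≤ T p := (h1 p).mpr hp
  have hcard : 1 ≤ ((skewCells lam nu).filter (fun q => T q = (T p - 1) + 1)).card := by
    apply Finset.card_pos.mpr
    exact ⟨p, Finset.mem_filter.mpr ⟨hp, by omega⟩⟩
  rw [h5 (T p - 1)] at hcard
  have : (T p - 1, 0) ∈ mu := by rw [mem_iff_lt_rowLen]; omega
  rw [mem_iff_lt_colLen] at this
  omega

lemma skew_col_le {lam mu nu : YoungDiagram} {T : ℕ × ℕ → ℕ} (hT : IsLRTableau lam mu nu T)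
    (j : ℕ) : nu.colLen j ≤ lam.colLen j + mu.colLen 0 := by
  classical
  have hsub : ∀ r ∈ Finset.Ico (lam.colLen j) (nu.colLen j), (r, j) ∈ skewCells lam nu := by
    intro r hr
    rw [Finset.mem_Ico] at hr
    rw [mem_skewCells, mem_iff_lt_colLen, mem_iff_lt_colLen]
    exact ⟨hr.2, by omega⟩
  have hmaps : ∀ r ∈ Finset.Ico (lam.colLen j) (nu.colLen j),
      T (r, j) ∈ Finset.Icc 1 (mu.colLen 0) := by
    intro r hr
    rw [Finset.mem_Icc]
    exact ⟨(hT.2.1 _).mpr (hsub r hr), entry_le hT (hsub r hr)⟩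
  have hinj : ∀ r ∈ Finset.Ico (lam.colLen j) (nu.colLen j),
      ∀ r' ∈ Finset.Ico (lam.colLen j) (nu.colLen j),
      T (r, j) = T (r', j) → r = r' := by
    intro r hr r' hr' heq
    by_contra hne
    rcases Nat.lt_or_ge r r' with h | h
    · exact absurd heq (Nat.ne_of_lt (hT.2.2.2.1 r r' j h (hsub r hr) (hsub r' hr')))
    · have h' : r' < r := by omega
      exact absurd heq.symm (Nat.ne_of_lt (hT.2.2.2.1 r' r j h' (hsub r' hr') (hsub r hr)))
  have := Finset.card_le_card_of_injOn (fun r => T (r, j)) hmaps hinj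
  simp only [Nat.card_Ico, Nat.card_Icc] at this
  omega

def fb (N : ℕ) (a : YoungDiagram) (i : ℕ) : ℕ := a.rowLen i + (N - 1 - i)

def bset (N : ℕ) (a : YoungDiagram) : Finset ℕ := (Finset.range N).image (fb N a)

lemma fb_lt {N : ℕ} (a : YoungDiagram) {i i' : ℕ} (h : i < i') (h' : i' < N) :
    fb N a i' < fb N a i := by
  have := a.rowLen_anti i i' (le_of_lt h)
  unfold fb; omega

lemma fb_anti {N : ℕ} (a : YoungDiagram) {i i' : ℕ} (h : i ≤ i') (h' : i' < N) :
    fb N a i' ≤ fb N a i := by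
  rcases Nat.eq_or_lt_of_le h with rfl | hlt
  · exact le_refl _
  · exact le_of_lt (fb_lt a hlt h')

lemma fb_injOn {N : ℕ} (a : YoungDiagram) : Set.InjOn (fb N a) (Finset.range N) := by
  intro i hi j hj hij
  simp only [Finset.coe_range, Set.mem_Iio] at hi hj
  by_contra hne
  rcases Nat.lt_or_ge i j with h | h
  · exact absurd hij (Nat.ne_of_gt (fb_lt a h hj))
  · have : j < i := by omega
    exact absurd hij (Nat.ne_of_lt (fb_lt a this hi))

lemma card_bset (N : ℕ) (a : YoungDiagram) : (bset N a).card = N := by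
  rw [bset, Finset.card_image_of_injOn (fb_injOn a), Finset.card_range]

lemma mem_bset {N : ℕ} {a : YoungDiagram} {x : ℕ} :
    x ∈ bset N a ↔ ∃ i, i < N ∧ fb N a i = x := by
  simp [bset, Finset.mem_image, Finset.mem_range]

lemma bset_le {N : ℕ} {a : YoungDiagram} {x : ℕ} (hx : x ∈ bset N a) :
    x ≤ a.rowLen 0 + (N - 1) := by
  rw [mem_bset] at hx
  obtain ⟨i, hi, rfl⟩ := hx
  have := a.rowLen_anti 0 i (Nat.zero_le _)
  unfold fb; omega

/-- The key structural lemma: removing a rim hook replaces one beta number β by β - n. -/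
lemma rim_beta {n N : ℕ} {a b : YoungDiagram} (h : IsRimHookRemoval n a b)
    (hn : 1 ≤ n) (hN : a.colLen 0 ≤ N) :
    ∃ β, β ∈ bset N a ∧ n ≤ β ∧ β - n ∉ bset N a ∧
      bset N b = insert (β - n) ((bset N a).erase β) := by
  classical
  obtain ⟨hba, hcard, hconn, h2⟩ := h
  set S := skewCells b a with hS
  have hSmem : ∀ i j : ℕ, (i, j) ∈ S ↔ b.rowLen i ≤ j ∧ j < a.rowLen i := by
    intro i j
    rw [hS, mem_skewCells, mem_iff_lt_rowLen, mem_iff_lt_rowLen]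
    omega
  have hSne : S.Nonempty := by
    rw [← Finset.card_pos, hcard]; omega
  set R := S.image Prod.fst with hR
  have hRne : R.Nonempty := hSne.image _
  set r := R.min' hRne with hr
  set q := R.max' hRne with hq
  have hmemR : ∀ i : ℕ, i ∈ R ↔ b.rowLen i < a.rowLen i := by
    intro i
    constructor
    · intro hi
      rw [hR, Finset.mem_image] at hi
      obtain ⟨⟨x, y⟩, hp, hpi⟩ := hi
      simp only at hpi
      subst hpi
      have h2 := (hSmem x y).mp hp
      omega
    · intro hi
      rw [hR, Finset.mem_image]
      exact ⟨(i, b.rowLen i), (hSmem i _).mpr ⟨le_refl _, hi⟩, rfl⟩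
  have hrR : r ∈ R := R.min'_mem hRne
  have hqR : q ∈ R := R.max'_mem hRne
  have hrq : r ≤ q := R.min'_le q hqR
  -- rows r..q are all nonempty
  have hinterval : ∀ i : ℕ, r ≤ i → i ≤ q → b.rowLen i < a.rowLen i := by
    intro i hri hiq
    rcases Nat.eq_or_lt_of_le hiq with heq | hiq'
    · rw [heq]; exact (hmemR q).mp hqR
    have hpr : ((r, b.rowLen r) : ℕ × ℕ) ∈ S := (hSmem r _).mpr ⟨le_refl _, (hmemR r).mp hrR⟩
    have hpq : ((q, b.rowLen q) : ℕ × ℕ) ∈ S := (hSmem q _).mpr ⟨le_refl _, (hmemR q).mp hqR⟩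
    have hpath := hconn _ hpr _ hpq
    have key : ∀ z : ℕ × ℕ, Relation.ReflTransGen
        (fun u v => u ∈ S ∧ v ∈ S ∧ Adjacent u v) (r, b.rowLen r) z →
        z.1 ≤ i ∨ ∃ w : ℕ × ℕ, w ∈ S ∧ w.1 = i := by
      intro z hz
      induction hz with
      | refl => left; exact hri
      | @tail u v _ hstep ih =>
        rcases ih with hle | hw
        · obtain ⟨hu, hv, hadj⟩ := hstep
          rcases hadj with ⟨h1, -⟩ | ⟨-, h1 | h1⟩
          · left; omega
          · left; omega
          · rcases Nat.lt_or_ge u.1 i with hui | hui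
            · left; omega
            · have : u.1 = i := by omega
              right; exact ⟨u, hu, this⟩
        · right; exact hw
    rcases key _ hpath with hle | ⟨w, hwS, hwi⟩
    · simp only at hle; omega
    · have : w.1 ∈ R := by rw [hR, Finset.mem_image]; exact ⟨w, hwS, rfl⟩
      rw [hwi] at this
      exact (hmemR i).mp this
  -- consecutive rows overlap
  have hoverlap : ∀ i : ℕ, r ≤ i → i < q → b.rowLen i < a.rowLen (i + 1) := by
    intro i hri hiq
    have hpi : ((i, b.rowLen i) : ℕ × ℕ) ∈ S :=
      (hSmem i _).mpr ⟨le_refl _, hinterval i hri (le_of_lt hiq)⟩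
    have hpi1 : ((i + 1, b.rowLen (i + 1)) : ℕ × ℕ) ∈ S :=
      (hSmem (i + 1) _).mpr ⟨le_refl _, hinterval (i + 1) (by omega) hiq⟩
    have hpath := hconn _ hpi _ hpi1
    have key : ∀ z : ℕ × ℕ, Relation.ReflTransGen
        (fun u v => u ∈ S ∧ v ∈ S ∧ Adjacent u v) (i, b.rowLen i) z →
        z.1 ≤ i ∨ ∃ jj : ℕ, (i, jj) ∈ S ∧ (i + 1, jj) ∈ S := by
      intro z hz
      induction hz with
      | refl => left; exact le_refl _
      | @tail u v _ hstep ih =>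
        rcases ih with hle | hw
        · obtain ⟨hu, hv, hadj⟩ := hstep
          rcases hadj with ⟨h1, -⟩ | ⟨h1, h2 | h2⟩
          · left; omega
          · left; omega
          · rcases Nat.lt_or_ge u.1 i with hui | hui
            · left; omega
            · have hu1 : u.1 = i := by omega
              right
              refine ⟨u.2, ?_, ?_⟩
              · have e1 : ((i, u.2) : ℕ × ℕ) = u := by rw [← hu1]
                rw [e1]; exact hu
              · have e2 : ((i + 1, u.2) : ℕ × ℕ) = v := by
                  rw [h1, show i + 1 = v.1 by omega]
                rw [e2]; exact hv
        · right; exact hw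
    rcases key _ hpath with hle | ⟨jj, hw1, hw2⟩
    · simp only at hle; omega
    · have h1 := (hSmem i jj).mp hw1
      have h2 := (hSmem (i + 1) jj).mp hw2
      omega
  -- no 2x2: overlap exactly one
  have hstep3 : ∀ i : ℕ, r ≤ i → i < q → b.rowLen i + 1 = a.rowLen (i + 1) := by
    intro i hri hiq
    have hov := hoverlap i hri hiq
    by_contra hne
    have hge : b.rowLen i + 2 ≤ a.rowLen (i + 1) := by omega
    apply h2
    refine ⟨i, b.rowLen i, ?_, ?_, ?_, ?_⟩
    · exact (hSmem i _).mpr ⟨le_refl _, by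
        have := a.rowLen_anti i (i + 1) (by omega); omega⟩
    · exact (hSmem (i + 1) _).mpr ⟨by have := b.rowLen_anti i (i + 1) (by omega); omega, by omega⟩
    · exact (hSmem i _).mpr ⟨by omega, by
        have := a.rowLen_anti i (i + 1) (by omega); omega⟩
    · exact (hSmem (i + 1) _).mpr ⟨by have := b.rowLen_anti i (i + 1) (by omega); omega, by omega⟩
  -- outside rows
  have houtside : ∀ i : ℕ, (i < r ∨ q < i) → b.rowLen i = a.rowLen i := by
    intro i hi
    have hnR : i ∉ R := by
      intro hiR
      rcases hi with h | h
      · exact absurd (R.min'_le i hiR) (by omega)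
      · exact absurd (R.le_max' i hiR) (by omega)
    rw [hmemR] at hnR
    have := rowLen_mono hba i
    omega
  have hqN : q < N := by
    have hq0 : 0 < a.rowLen q := by have := (hmemR q).mp hqR; omega
    have hm : (q, 0) ∈ a := by rw [mem_iff_lt_rowLen]; omega
    rw [mem_iff_lt_colLen] at hm
    omega
  -- cardinality computation
  have hfiber : ∀ i : ℕ, (S.filter (fun p => p.1 = i)).card = a.rowLen i - b.rowLen i := by
    intro i
    have himg : S.filter (fun p => p.1 = i)
        = (Finset.Ico (b.rowLen i) (a.rowLen i)).image (fun j => (i, j)) := by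
      ext ⟨x, y⟩
      simp only [Finset.mem_filter, Finset.mem_image, Finset.mem_Ico]
      constructor
      · rintro ⟨hxy, rfl⟩
        exact ⟨y, (hSmem x y).mp hxy, rfl⟩
      · rintro ⟨j, hj, heq⟩
        have h1 : i = x := congrArg Prod.fst heq
        have h2 : j = y := congrArg Prod.snd heq
        subst h1; subst h2
        exact ⟨(hSmem i j).mpr hj, rfl⟩
    rw [himg, Finset.card_image_of_injective _ (fun j j' hjj => by simpa using hjj),
      Nat.card_Ico]
  have hsum : n = ∑ i ∈ Finset.range N, (a.rowLen i - b.rowLen i) := by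
    rw [← hcard]
    rw [Finset.card_eq_sum_card_fiberwise (f := Prod.fst) (t := Finset.range N)
      (fun p hp => by
        rw [Finset.mem_coe, Finset.mem_range]
        have : p.1 ∈ R := by rw [hR, Finset.mem_image]; exact ⟨p, hp, rfl⟩
        have := R.le_max' p.1 this
        omega)]
    exact Finset.sum_congr rfl (fun i _ => hfiber i)
  -- restrict the sum to Icc r q
  have hsum2 : n = ∑ i ∈ Finset.Icc r q, (a.rowLen i - b.rowLen i) := by
    have hsub : Finset.Icc r q ⊆ Finset.range N := fun i hi => by
      rw [Finset.mem_Icc] at hi; rw [Finset.mem_range]; omega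
    rw [hsum]
    refine (Finset.sum_subset hsub fun i _ hni => ?_).symm
    rw [Finset.mem_Icc] at hni
    have := houtside i (by omega)
    omega
  -- telescope
  have htel : ∀ d : ℕ, r + d ≤ q →
      (∑ i ∈ Finset.Icc r (r + d), (a.rowLen i - b.rowLen i)) + b.rowLen (r + d)
        = a.rowLen r + d := by
    intro d
    induction d with
    | zero =>
      intro _
      simp only [Nat.add_zero, Finset.Icc_self, Finset.sum_singleton]
      have := rowLen_mono hba r
      omega
    | succ d ih =>
      intro hd
      have ih' := ih (by omega)
      rw [show r + (d + 1) = (r + d) + 1 by omega, Finset.sum_Icc_succ_top (by omega)]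
      have h3 := hstep3 (r + d) (by omega) (by omega)
      have h4 := rowLen_mono hba (r + d + 1)
      omega
  have hkey : n + b.rowLen q = a.rowLen r + (q - r) := by
    have := htel (q - r) (by omega)
    rw [show r + (q - r) = q by omega] at this
    omega
  -- the beta numbers
  set β := fb N a r with hβ
  set V := fb N b q with hV
  have hβmem : β ∈ bset N a := mem_bset.mpr ⟨r, by omega, rfl⟩
  have hVmem : V ∈ bset N b := mem_bset.mpr ⟨q, by omega, rfl⟩
  have hβV : β = V + n := by
    rw [hβ, hV]; unfold fb; omega
  have hbeq : bset N b = insert V ((bset N a).erase β) := by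
    ext x
    simp only [Finset.mem_insert, Finset.mem_erase]
    constructor
    · intro hx
      rw [mem_bset] at hx
      obtain ⟨i, hiN, rfl⟩ := hx
      rcases Nat.lt_or_ge i r with hir | hir
      · right
        have he : fb N b i = fb N a i := by unfold fb; rw [houtside i (Or.inl hir)]
        refine ⟨?_, mem_bset.mpr ⟨i, hiN, he.symm⟩⟩
        rw [he, hβ]
        exact Nat.ne_of_gt (fb_lt a hir (by omega))
      rcases Nat.lt_or_ge i q with hiq | hiq
      · right
        have h3 := hstep3 i hir hiq
        have he : fb N b i = fb N a (i + 1) := by unfold fb; omega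
        refine ⟨?_, mem_bset.mpr ⟨i + 1, by omega, he.symm⟩⟩
        rw [he, hβ]
        exact Nat.ne_of_lt (fb_lt a (by omega) (by omega))
      rcases Nat.eq_or_lt_of_le hiq with rfl | hiq'
      · left; rw [hV]
      · right
        have he : fb N b i = fb N a i := by unfold fb; rw [houtside i (Or.inr hiq')]
        refine ⟨?_, mem_bset.mpr ⟨i, hiN, he.symm⟩⟩
        rw [he, hβ]
        exact Nat.ne_of_lt (fb_lt a (by omega) hiN)
    · intro hx
      rcases hx with rfl | ⟨hne, hx⟩
      · exact hVmem
      · rw [mem_bset] at hx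
        obtain ⟨i, hiN, rfl⟩ := hx
        have hir : i ≠ r := by
          intro hir
          exact hne (by rw [hir, hβ])
        rcases Nat.lt_or_ge i r with h1 | h1
        · exact mem_bset.mpr ⟨i, hiN, by unfold fb; rw [houtside i (Or.inl h1)]⟩
        rcases Nat.lt_or_ge q i with h2 | h2
        · exact mem_bset.mpr ⟨i, hiN, by unfold fb; rw [houtside i (Or.inr h2)]⟩
        · have hri : r < i := by omega
          have h3 := hstep3 (i - 1) (by omega) (by omega)
          rw [show i - 1 + 1 = i by omega] at h3
          exact mem_bset.mpr ⟨i - 1, by omega, by unfold fb; omega⟩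
  have hnβ : n ≤ β := by omega
  have hVβ : V = β - n := by omega
  have hVnot : V ∉ bset N a := by
    intro hVa
    have hVne : V ≠ β := by omega
    have hVer : V ∈ (bset N a).erase β := Finset.mem_erase.mpr ⟨hVne, hVa⟩
    have : insert V ((bset N a).erase β) = (bset N a).erase β := Finset.insert_eq_self.mpr hVer
    have hcb := card_bset N b
    rw [hbeq, this, Finset.card_erase_of_mem hβmem, card_bset N a] at hcb
    omega
  exact ⟨β, hβmem, hnβ, by rw [← hVβ]; exact hVnot, by rw [← hVβ]; exact hbeq⟩


def counted (N n : ℕ) (a : YoungDiagram) : Finset ℕ :=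
  (bset N a).filter (fun x => n ≤ x ∧ x - n ∉ bset N a)

lemma psi_step {n N : ℕ} {a b : YoungDiagram} (h : IsRimHookRemoval n a b)
    (hn : 1 ≤ n) (hN : a.colLen 0 ≤ N) (hNpos : 1 ≤ N)
    (hsmall : a.rowLen 0 + N ≤ 2 * n) :
    (counted N n b).card + 1 ≤ (counted N n a).card := by
  classical
  obtain ⟨β, hβmem, hnβ, hβn, hbeq⟩ := rim_beta h hn hN
  have hbale : b ≤ a := h.1
  have hβle : β ≤ a.rowLen 0 + (N - 1) := bset_le hβmem
  have hsub : counted N n b ⊆ (counted N n a).erase β := by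
    intro x hx
    rw [counted, Finset.mem_filter] at hx
    obtain ⟨hxb, hnx, hxn⟩ := hx
    have hxle : x ≤ a.rowLen 0 + (N - 1) := by
      have h1 := bset_le hxb
      have h2 := rowLen_mono hbale 0
      omega
    rw [hbeq, Finset.mem_insert, Finset.mem_erase] at hxb
    rcases hxb with rfl | ⟨hxne, hxa⟩
    · omega
    · rw [Finset.mem_erase, counted, Finset.mem_filter]
      refine ⟨hxne, hxa, hnx, ?_⟩
      intro hxna
      have h1 : x - n ≠ β := by omega
      have h2 : x - n ∈ (bset N a).erase β := Finset.mem_erase.mpr ⟨h1, hxna⟩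
      have h3 : x - n ∈ bset N b := by
        rw [hbeq]; exact Finset.mem_insert_of_mem h2
      exact hxn h3
  have hβc : β ∈ counted N n a := by
    rw [counted, Finset.mem_filter]
    exact ⟨hβmem, hnβ, hβn⟩
  have h1 := Finset.card_le_card hsub
  rw [Finset.card_erase_of_mem hβc] at h1
  have h2 : 1 ≤ (counted N n a).card := Finset.card_pos.mpr ⟨β, hβc⟩
  omega

lemma chain_le {l k : ℕ} (hk : 1 ≤ k) {ρ : YoungDiagram}
    (hρk : ρ.rowLen 0 ≤ k) (hρl : ρ.colLen 0 ≤ 2 * l) (hlpos : 1 ≤ l) :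
    ∀ (e : ℕ) (s : ℤ) (a nu : YoungDiagram), a ≤ ρ →
      ReachesInSign (l + k) k e s a nu → e ≤ (counted (2 * l) (l + k) a).card := by
  intro e
  induction e with
  | zero => intro _ _ _ _ _; omega
  | succ e ih =>
    intro s a nu ha hr
    obtain ⟨c, s', hstep, hrest, -⟩ := hr
    have hca : c ≤ a := hstep.1
    have h1 := psi_step hstep (by omega)
      (le_trans (colLen_mono ha 0) hρl) (by omega)
      (by have := le_trans (rowLen_mono ha 0) hρk; omega)
    have h2 := ih s' c nu (le_trans hca ha) hrest
    omega

lemma decode {l k e : ℕ} (hl : 1 ≤ l) (hk : 1 ≤ k) {ρ : YoungDiagram}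
    (hρk : ρ.rowLen 0 ≤ k) (he : 1 ≤ e)
    (hce : e ≤ (counted (2 * l) (l + k) ρ).card) :
    ∃ J : ℕ, e ≤ J + 1 ∧ l + e ≤ ρ.colLen J := by
  classical
  set N := 2 * l with hN
  set n := l + k with hn
  set C := counted N n ρ with hC
  have hMcard : (C.image (fun x => x - n)).card = C.card := by
    apply Finset.card_image_of_injOn
    intro x hx y hy hxy
    rw [Finset.mem_coe, hC, counted, Finset.mem_filter] at hx hy
    have h1 : n ≤ x := hx.2.1
    have h2 : n ≤ y := hy.2.1
    have h3 : x - n = y - n := hxy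
    omega
  set M := C.image (fun x => x - n) with hM
  have hMne : M.Nonempty := by
    rw [← Finset.card_pos, hMcard]; omega
  set m := M.max' hMne with hm
  have hmM : m ∈ M := M.max'_mem hMne
  obtain ⟨x', hx'C, hx'm⟩ := Finset.mem_image.mp hmM
  have hx'props : x' ∈ bset N ρ ∧ n ≤ x' ∧ x' - n ∉ bset N ρ := by
    rw [hC, counted, Finset.mem_filter] at hx'C; exact hx'C
  have hx'eq : x' = m + n := by omega
  have hmnot : m ∉ bset N ρ := by
    have := hx'props.2.2; rw [← hx'm]; exact this
  set G := (Finset.range m).filter (fun y => y ∉ bset N ρ) with hG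
  set J := G.card with hJdef
  have hJ : e ≤ J + 1 := by
    have hsub : M.erase m ⊆ G := by
      intro y hy
      rw [Finset.mem_erase] at hy
      obtain ⟨hyne, hyM⟩ := hy
      obtain ⟨x, hxC, hxy⟩ := Finset.mem_image.mp hyM
      rw [hC, counted, Finset.mem_filter] at hxC
      rw [hG, Finset.mem_filter, Finset.mem_range]
      have hym : y ≤ m := by rw [hm]; exact M.le_max' y hyM
      exact ⟨by omega, by rw [← hxy]; exact hxC.2.2⟩
    have h1 := Finset.card_le_card hsub
    rw [Finset.card_erase_of_mem hmM, hMcard] at h1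
    omega
  have hx'le : x' ≤ ρ.rowLen 0 + (N - 1) := bset_le hx'props.1
  have hml : m + 1 ≤ l := by omega
  -- the initial segment of rows with beta > m
  set A := (Finset.range N).filter (fun i => m < fb N ρ i) with hA
  set t := A.card with ht
  have htpos : 1 ≤ t := by
    obtain ⟨i', hi'N, hfi'⟩ := mem_bset.mp hx'props.1
    rw [ht]
    apply Finset.card_pos.mpr
    exact ⟨i', by rw [hA, Finset.mem_filter, Finset.mem_range]; constructor; omega; omega⟩
  have hcomp : ((Finset.range N).filter (fun i => ¬ m < fb N ρ i)).card = m - J := by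
    have himg : ((Finset.range N).filter (fun i => ¬ m < fb N ρ i)).image (fb N ρ)
        = (Finset.range m).filter (fun y => y ∈ bset N ρ) := by
      ext y
      simp only [Finset.mem_image, Finset.mem_filter, Finset.mem_range]
      constructor
      · rintro ⟨i, ⟨hiN, hile⟩, rfl⟩
        have : fb N ρ i ∈ bset N ρ := mem_bset.mpr ⟨i, hiN, rfl⟩
        have hne : fb N ρ i ≠ m := fun hc => hmnot (hc ▸ this)
        exact ⟨by omega, this⟩
      · rintro ⟨hym, hyb⟩
        obtain ⟨i, hiN, hfi⟩ := mem_bset.mp hyb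
        exact ⟨i, ⟨hiN, by omega⟩, hfi⟩
    have hinj : (((Finset.range N).filter (fun i => ¬ m < fb N ρ i)).image (fb N ρ)).card
        = ((Finset.range N).filter (fun i => ¬ m < fb N ρ i)).card := by
      apply Finset.card_image_of_injOn
      intro x hx y hy hxy
      rw [Finset.mem_coe, Finset.mem_filter, Finset.mem_range] at hx hy
      refine fb_injOn ρ ?_ ?_ hxy
      · simp only [Finset.coe_range, Set.mem_Iio]; exact hx.1
      · simp only [Finset.coe_range, Set.mem_Iio]; exact hy.1
    have hsplit : ((Finset.range m).filter (fun y => y ∈ bset N ρ)).card + J = m := by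
      rw [hJdef, hG]
      rw [Finset.card_filter_add_card_filter_not, Finset.card_range]
    rw [← hinj, himg]
    omega
  have htotal : t + (m - J) = N := by
    rw [ht, ← hcomp]
    rw [Finset.card_filter_add_card_filter_not, Finset.card_range]
  have hJm : J ≤ m := by
    rw [hJdef]
    calc G.card ≤ (Finset.range m).card := Finset.card_le_card (Finset.filter_subset _ _)
    _ = m := Finset.card_range m
  have hlast : m < fb N ρ (t - 1) := by
    by_contra hc
    push_neg at hc
    have hsub : A ⊆ Finset.range (t - 1) := by
      intro i hi
      rw [hA, Finset.mem_filter, Finset.mem_range] at hi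
      rw [Finset.mem_range]
      by_contra hge
      push_neg at hge
      have := fb_anti ρ hge hi.1
      omega
    have := Finset.card_le_card hsub
    rw [Finset.card_range] at this
    omega
  have hrow : J < ρ.rowLen (t - 1) := by
    have : fb N ρ (t - 1) = ρ.rowLen (t - 1) + (N - 1 - (t - 1)) := rfl
    omega
  have hmem : ((t - 1 : ℕ), J) ∈ ρ := by rw [mem_iff_lt_rowLen]; exact hrow
  rw [mem_iff_lt_colLen] at hmem
  exact ⟨J, hJ, by omega⟩


lemma diag_ge {xi : YoungDiagram} {e : ℕ} (h : ∀ t, t < e → (t, t) ∈ xi) :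
    e ≤ diagLen xi := by
  classical
  have hsub : (Finset.range e).image (fun t => ((t, t) : ℕ × ℕ))
      ⊆ xi.cells.filter (fun p => p.1 = p.2) := by
    intro p hp
    obtain ⟨t, ht, rfl⟩ := Finset.mem_image.mp hp
    rw [Finset.mem_range] at ht
    exact Finset.mem_filter.mpr ⟨(mem_cells _).mpr (h t ht), rfl⟩
  have := Finset.card_le_card hsub
  rw [Finset.card_image_of_injective _ (fun x y hxy => by simpa using congrArg Prod.fst hxy),
    Finset.card_range] at this
  exact this
  
/-- lattice chain: counts of larger values are at most counts of smaller values -/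
lemma cnt_chain {lam mu nu : YoungDiagram} {T : ℕ × ℕ → ℕ} (hT : IsLRTableau lam mu nu T)
    (v d i j : ℕ) (hv : 1 ≤ v) :
    ((skewCells lam nu).filter
        (fun p => T p = v + d ∧ (p.1 < i ∨ (p.1 = i ∧ j ≤ p.2)))).card ≤
      ((skewCells lam nu).filter
        (fun p => T p = v ∧ (p.1 < i ∨ (p.1 = i ∧ j ≤ p.2)))).card := by
  induction d with
  | zero => exact le_refl _
  | succ d ih =>
    refine le_trans ?_ ih
    have := hT.2.2.2.2.2 i j (v + d - 1)
    rw [show v + d - 1 + 2 = v + (d + 1) by omega, show v + d - 1 + 1 = v + d by omega] at this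
    exact this

/-- The key LR lemma: if rows l..l+e-1 are fully contained in the skew shape
(with length ≥ e), then mu has at least e diagonal cells. -/
lemma diag_mu_ge {l e : ℕ} {lam mu ρ : YoungDiagram} {T : ℕ × ℕ → ℕ}
    (hT : IsLRTableau lam mu ρ T) (he : 1 ≤ e) {J : ℕ} (hJ : e ≤ J + 1)
    (hcol : l + e ≤ ρ.colLen J) (hlamcol : ∀ c, lam.colLen c ≤ l) :
    e ≤ diagLen mu := by
  classical
  set R := l + e - 1 with hR
  have hskew : ∀ r c : ℕ, l ≤ r → r < l + e → c ≤ J → (r, c) ∈ skewCells lam ρ := by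
    intro r c hr1 hr2 hc
    rw [mem_skewCells]
    constructor
    · have hmem : ((l + e - 1 : ℕ), J) ∈ ρ := by rw [mem_iff_lt_colLen]; omega
      exact ρ.up_left_mem (by omega) hc hmem
    · rw [mem_iff_lt_colLen]
      have := hlamcol c
      omega
  -- entries in column 0 grow
  have hv : ∀ t, t < e → t + 1 ≤ T (l + t, 0) := by
    intro t
    induction t with
    | zero =>
      intro _
      exact (hT.2.1 _).mpr (hskew l 0 (le_refl _) (by omega) (by omega))
    | succ t ih =>
      intro ht
      have h1 := ih (by omega)
      have h2 := hT.2.2.2.1 (l + t) (l + t + 1) 0 (by omega)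
        (hskew (l + t) 0 (by omega) (by omega) (by omega))
        (hskew (l + t + 1) 0 (by omega) (by omega) (by omega))
      have h3 : T (l + (t + 1), 0) = T (l + t + 1, 0) := rfl
      omega
  -- the counting claim along the bottom row
  have hclaim : ∀ d, d < e →
      d + 1 ≤ ((skewCells lam ρ).filter
        (fun p => T p = T (R, e - 1 - d) ∧
          (p.1 < R ∨ (p.1 = R ∧ e - 1 - d ≤ p.2)))).card := by
    intro d
    induction d with
    | zero =>
      intro _
      apply Finset.card_pos.mpr
      refine ⟨(R, e - 1 - 0), Finset.mem_filter.mpr ⟨?_, rfl, Or.inr ⟨rfl, le_refl _⟩⟩⟩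
      exact hskew R (e - 1 - 0) (by omega) (by omega) (by omega)
    | succ d ih =>
      intro hd
      have hd' : d < e := by omega
      set c := e - 1 - (d + 1) with hc
      have hc1 : e - 1 - d = c + 1 := by omega
      have hcJ : c + 1 ≤ J := by omega
      have hmc : ((R, c) : ℕ × ℕ) ∈ skewCells lam ρ :=
        hskew R c (by omega) (by omega) (by omega)
      have hmc1 : ((R, c + 1) : ℕ × ℕ) ∈ skewCells lam ρ :=
        hskew R (c + 1) (by omega) (by omega) (by omega)
      have huu : T (R, c) ≤ T (R, c + 1) := hT.2.2.1 R c (c + 1) (by omega) hmc hmc1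
      have hu1 : 1 ≤ T (R, c) := (hT.2.1 _).mpr hmc
      -- step 1: chain from T (R, c+1) down to T (R, c) at prefix (R, c+1)
      have hstep1 : ((skewCells lam ρ).filter
            (fun p => T p = T (R, c + 1) ∧ (p.1 < R ∨ (p.1 = R ∧ c + 1 ≤ p.2)))).card ≤
          ((skewCells lam ρ).filter
            (fun p => T p = T (R, c) ∧ (p.1 < R ∨ (p.1 = R ∧ c + 1 ≤ p.2)))).card := by
        have := cnt_chain hT (T (R, c)) (T (R, c + 1) - T (R, c)) R (c + 1) hu1
        rw [show T (R, c) + (T (R, c + 1) - T (R, c)) = T (R, c + 1) by omega] at this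
        exact this
      -- step 2: adding the cell (R, c)
      have hstep2 : ((skewCells lam ρ).filter
            (fun p => T p = T (R, c) ∧ (p.1 < R ∨ (p.1 = R ∧ c + 1 ≤ p.2)))).card + 1 ≤
          ((skewCells lam ρ).filter
            (fun p => T p = T (R, c) ∧ (p.1 < R ∨ (p.1 = R ∧ c ≤ p.2)))).card := by
        have hnotmem : ((R, c) : ℕ × ℕ) ∉ (skewCells lam ρ).filter
            (fun p => T p = T (R, c) ∧ (p.1 < R ∨ (p.1 = R ∧ c + 1 ≤ p.2))) := by
          intro hmem
          have := (Finset.mem_filter.mp hmem).2.2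
          simp only at this
          omega
        have hins : insert ((R, c) : ℕ × ℕ) ((skewCells lam ρ).filter
            (fun p => T p = T (R, c) ∧ (p.1 < R ∨ (p.1 = R ∧ c + 1 ≤ p.2)))) ⊆
            (skewCells lam ρ).filter
            (fun p => T p = T (R, c) ∧ (p.1 < R ∨ (p.1 = R ∧ c ≤ p.2))) := by
          intro p hp
          rcases Finset.mem_insert.mp hp with rfl | hp'
          · exact Finset.mem_filter.mpr ⟨hmc, rfl, Or.inr ⟨rfl, le_refl _⟩⟩
          · have := Finset.mem_filter.mp hp'
            refine Finset.mem_filter.mpr ⟨this.1, this.2.1, ?_⟩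
            rcases this.2.2 with h | ⟨h1, h2⟩
            · exact Or.inl h
            · exact Or.inr ⟨h1, by omega⟩
        have := Finset.card_le_card hins
        rw [Finset.card_insert_of_notMem hnotmem] at this
        omega
      have hih := ih hd'
      rw [hc1] at hih
      omega
  -- conclude
  have hfinal := hclaim (e - 1) (by omega)
  rw [show e - 1 - (e - 1) = 0 by omega] at hfinal
  set v := T (R, 0) with hvdef
  have hve : e ≤ v := by
    have := hv (e - 1) (by omega)
    rw [show l + (e - 1) = R by omega] at this
    omega
  have hcount : e ≤ mu.rowLen (v - 1) := by
    have hsub : (skewCells lam ρ).filter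
        (fun p => T p = v ∧ (p.1 < R ∨ (p.1 = R ∧ 0 ≤ p.2))) ⊆
        (skewCells lam ρ).filter (fun p => T p = (v - 1) + 1) := by
      intro p hp
      have := Finset.mem_filter.mp hp
      refine Finset.mem_filter.mpr ⟨this.1, by omega⟩
    have h1 := Finset.card_le_card hsub
    rw [hT.2.2.2.2.1 (v - 1)] at h1
    omega
  apply diag_ge
  intro t ht
  rw [mem_iff_lt_rowLen]
  have := mu.rowLen_anti t (v - 1) (by omega)
  omega


end Auxiliary

/-- For `lam, mu ⊆ l × k`, the maximal power of `q` appearing in the quantum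
product `σ_lam * σ_mu` in `QH^*(Gr(l, l+k))` is at most `min(diag(lam), diag(mu))`: every
`e` and `nu ⊆ l × k` with nonzero quantum coefficient satisfy
`e ≤ min(diag(lam), diag(mu))`. -/
theorem dmax_le_min_diag (l k : ℕ) (hl : 1 ≤ l) (hk : 1 ≤ k) (lam mu : YoungDiagram)
    (hlam : lam ≤ rect l k) (hmu : mu ≤ rect l k) :
    ∀ (e : ℕ) (nu : YoungDiagram), nu ≤ rect l k → qCoeff l k lam mu nu e ≠ 0 →
      e ≤ min (diagLen lam) (diagLen mu) := by
  intro e nu hnu hq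
  rcases Nat.eq_zero_or_pos e with rfl | he
  · exact Nat.zero_le _
  have hex : ∃ s : ℤ, Nonempty (QSet l k lam mu nu e s) := by
    by_contra hc
    push_neg at hc
    have h1 : Nat.card (QSet l k lam mu nu e 1) = 0 := by
      have h := hc 1
      exact @Nat.card_of_isEmpty _ h
    have h2 : Nat.card (QSet l k lam mu nu e (-1)) = 0 := by
      have h := hc (-1)
      exact @Nat.card_of_isEmpty _ h
    apply hq
    rw [qCoeff, h1, h2]
    ring
  obtain ⟨s, ⟨⟨p, hLR, hρk, hreach, hcore⟩⟩⟩ := hex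
  have hmul : mu.colLen 0 ≤ l := colLen_rect_le hmu 0
  have hlamcol : ∀ c, lam.colLen c ≤ l := fun c => colLen_rect_le hlam c
  have hρl : p.1.colLen 0 ≤ 2 * l := by
    have h1 := skew_col_le hLR 0
    have h2 := hlamcol 0
    omega
  have hchain := chain_le hk hρk hρl hl e s p.1 nu (le_refl p.1) hreach
  obtain ⟨J, hJ, hcol⟩ := decode hl hk hρk he hchain
  refine le_min ?_ ?_
  · apply diag_ge
    intro t ht
    have h1 := skew_col_le hLR J
    have h2 : e ≤ lam.colLen J := by omega
    have hmem : ((e - 1 : ℕ), J) ∈ lam := by rw [mem_iff_lt_colLen]; omega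
    exact lam.up_left_mem (by omega) (by omega) hmem
  · exact diag_mu_ge hLR he hJ hcol hlamcol

end QCGrass
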